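/- Let T' be an SSYT of shape λ with entries in {1,...,r} such that (a) every entry of {1,...,r} appears at least once, and (b) for each j ∈ {1,...,r-1} the rightmost occurrence of entry j is not in a column strictly left of the leftmost occurrence of entry j+1 (hence is in a strictly higher row than it). Order the boxes by entry value, and among equal entries from left to right, and fill the k-th box in this order with k; the resulting filling T is a standard Young tableau of shape λ with exactly r-1 descents. -/

import Mathlib

def IsPartition (r : ℕ) (μ : ℕ → ℕ) : Prop :=
  (∀ i j, i ≤ j → μ j ≤ μ i) ∧ ∀ i, r ≤ i → μ i = 0

def ZeroOutside (μ : ℕ → ℕ) (T : ℕ → ℕ → ℕ) : Prop :=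
  ∀ i j, ¬ j < μ i → T i j = 0

/-- A semistandard filling of the Young diagram of `μ` (cells `(i,j)` with `j < μ i`)
with entries in `{1,…,r}`: weakly increasing along rows, strictly increasing down columns. -/
def IsSSYT (μ : ℕ → ℕ) (r : ℕ) (T : ℕ → ℕ → ℕ) : Prop :=
  (∀ i j, j < μ i → 1 ≤ T i j ∧ T i j ≤ r) ∧
  (∀ i j k, j ≤ k → k < μ i → T i j ≤ T i k) ∧
  (∀ i j, j < μ (i + 1) → T i j < T (i + 1) j)

/-- the `v`-weight: number of boxes of `μ` filled with entry `v`. -/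
noncomputable def wgt (μ : ℕ → ℕ) (T : ℕ → ℕ → ℕ) (v : ℕ) : ℕ :=
  {p : ℕ × ℕ | p.2 < μ p.1 ∧ T p.1 p.2 = v}.ncard

/-- A `(v)`-strip of width `w`: one box in each of the `w` columns, all filled with `v`,
in weakly rising (left-to-right) configuration; `f j` is the row of the box in column `j`. -/
def HasIStrip (μ : ℕ → ℕ) (w : ℕ) (T : ℕ → ℕ → ℕ) (v : ℕ) : Prop :=
  ∃ f : ℕ → ℕ, (∀ j k, j ≤ k → k < w → f k ≤ f j) ∧
    ∀ j, j < w → j < μ (f j) ∧ T (f j) j = v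

/-- `(f, m)` is a `(v,v+1)`-strip of width `w`: one box per column, entries `v` in the
first `m` columns and `v+1` thereafter, weakly rising left-to-right. -/
def IsIIStrip (μ : ℕ → ℕ) (w : ℕ) (T : ℕ → ℕ → ℕ) (v : ℕ) (f : ℕ → ℕ) (m : ℕ) : Prop :=
  m ≤ w ∧ (∀ j k, j ≤ k → k < w → f k ≤ f j) ∧ (∀ j, j < w → j < μ (f j)) ∧
  (∀ j, j < m → T (f j) j = v) ∧ (∀ j, m ≤ j → j < w → T (f j) j = v + 1)

def HasIIStrip (μ : ℕ → ℕ) (w : ℕ) (T : ℕ → ℕ → ℕ) (v : ℕ) : Prop :=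
  ∃ f m, IsIIStrip μ w T v f m

/-- 1-strip-less: no `(i)`-strip for `i ∈ {1,…,r}` and no `(i,i+1)`-strip for
`i ∈ {1,…,r-1}`. -/
def OneStripLess (μ : ℕ → ℕ) (w : ℕ) (r : ℕ) (T : ℕ → ℕ → ℕ) : Prop :=
  (∀ v, 1 ≤ v → v ≤ r → ¬ HasIStrip μ w T v) ∧
  (∀ v, 1 ≤ v → v ≤ r - 1 → ¬ HasIIStrip μ w T v)

/-- Number of SSYTs of shape `μ` with entries in `{1,…,r}`. -/
noncomputable def ssytCount (r : ℕ) (μ : ℕ → ℕ) : ℕ :=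
  {T : ℕ → ℕ → ℕ | IsSSYT μ r T ∧ ZeroOutside μ T}.ncard

/-- `μ` with its first `j` parts removed. -/
def shiftPart (μ : ℕ → ℕ) (j : ℕ) : ℕ → ℕ := fun i => μ (i + j)

/-- A standard Young tableau of shape `μ` with entries `1,…,N`. -/
def IsSYT (μ : ℕ → ℕ) (N : ℕ) (T : ℕ → ℕ → ℕ) : Prop :=
  (∀ i j, j < μ i → 1 ≤ T i j ∧ T i j ≤ N) ∧
  (∀ i j i' j', j < μ i → j' < μ i' → T i j = T i' j' → (i, j) = (i', j')) ∧
  (∀ i j, j + 1 < μ i → T i j < T i (j + 1)) ∧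
  (∀ i j, j < μ (i + 1) → T i j < T (i + 1) j)

/-- `k` is a descent of the SYT `T`: the entry `k+1` appears in a strictly lower row. -/
def IsDescent (μ : ℕ → ℕ) (T : ℕ → ℕ → ℕ) (k : ℕ) : Prop :=
  ∃ i j i' j', j < μ i ∧ j' < μ i' ∧ T i j = k ∧ T i' j' = k + 1 ∧ i < i'

/-- Let `T'` be an SSYT of shape `lam` with entries in `{1,…,r}` such that every entry
appears at least once and, for each `v ∈ {1,…,r-1}`, the rightmost occurrence of `v` is
not in a column strictly left of the leftmost occurrence of `v+1`.  Ordering the boxes by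
entry value and, among equal entries, from left to right, and filling the `k`-th box with
`k` produces a standard Young tableau of shape `lam` with exactly `r-1` descents. -/
lemma keyStepAux (M a b c d : ℕ) (hb : b < M) (hac : a < c) : a*M+b < c*M+d :=
  calc a*M+b < a*M+M := by omega
    _ = (a+1)*M := by ring
    _ ≤ c*M := Nat.mul_le_mul (Nat.succ_le_of_lt hac) le_rfl
    _ ≤ c*M+d := Nat.le_add_right _ _

lemma keyLtAux (M a b c d : ℕ) (hb : b < M) (hd : d < M) :
    a*M+b < c*M+d ↔ a < c ∨ (a = c ∧ b < d) := by
  constructor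
  · intro h
    rcases Nat.lt_trichotomy a c with h1|h1|h1
    · exact Or.inl h1
    · subst h1; exact Or.inr ⟨rfl, Nat.lt_of_add_lt_add_left h⟩
    · exact absurd h (Nat.not_lt.2 (le_of_lt (keyStepAux M c d a b hd h1)))
  · rintro (h | ⟨rfl, h⟩)
    · exact keyStepAux M a b c d hb h
    · exact Nat.add_lt_add_left h _

lemma keyEqAux (M a b c d : ℕ) (hb : b < M) (hd : d < M) (h : a*M+b = c*M+d) :
    a = c ∧ b = d := by
  rcases Nat.lt_trichotomy a c with h1|h1|h1
  · exact absurd h (Nat.ne_of_lt (keyStepAux M a b c d hb h1))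
  · subst h1; exact ⟨rfl, Nat.add_left_cancel h⟩
  · exact absurd h.symm (Nat.ne_of_lt (keyStepAux M c d a b hd h1))

def cellsF (R : ℕ) (lam : ℕ → ℕ) : Finset (ℕ × ℕ) :=
  (Finset.range R).biUnion fun i => ({i} : Finset ℕ) ×ˢ Finset.range (lam i)

def keyF (lam : ℕ → ℕ) (T' : ℕ → ℕ → ℕ) (p : ℕ × ℕ) : ℕ := T' p.1 p.2 * lam 0 + p.2

theorem stmt18 (R r : ℕ) (hr : 1 ≤ r) (lam : ℕ → ℕ) (hp : IsPartition R lam)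
    (T' : ℕ → ℕ → ℕ) (hT' : IsSSYT lam r T') (hz : ZeroOutside lam T')
    (hall : ∀ v, 1 ≤ v → v ≤ r → ∃ i j, j < lam i ∧ T' i j = v)
    (hcond : ∀ v, 1 ≤ v → v ≤ r - 1 → ∃ i₁ j₁ i₂ j₂, j₁ < lam i₁ ∧ j₂ < lam i₂ ∧
        T' i₁ j₁ = v ∧ T' i₂ j₂ = v + 1 ∧ j₂ ≤ j₁)
    (T : ℕ → ℕ → ℕ)
    (hTdef : ∀ i j, T i j = if j < lam i then
        ({q : ℕ × ℕ | q.2 < lam q.1 ∧ (T' q.1 q.2 < T' i j ∨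
            (T' q.1 q.2 = T' i j ∧ q.2 < j))}.ncard + 1) else 0) :
    IsSYT lam (∑ i ∈ Finset.range R, lam i) T ∧
    {k : ℕ | IsDescent lam T k}.ncard = r - 1 := by
  classical
  obtain ⟨hmono, hzero⟩ := hp
  obtain ⟨hbd, hrow, hcol⟩ := hT'
  set cells := cellsF R lam with hcellsdef
  set key := keyF lam T' with hkeydef
  have hmem : ∀ p : ℕ × ℕ, p ∈ cells ↔ p.2 < lam p.1 := by
    intro p
    simp only [hcellsdef, cellsF, Finset.mem_biUnion, Finset.mem_product,
      Finset.mem_singleton, Finset.mem_range]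
    constructor
    · rintro ⟨i, hi, h1, h2⟩; rw [h1]; exact h2
    · intro h
      refine ⟨p.1, ?_, rfl, h⟩
      by_contra hR
      have := hzero p.1 (by omega)
      omega
  have hcard : cells.card = ∑ i ∈ Finset.range R, lam i := by
    rw [hcellsdef, cellsF, Finset.card_biUnion]
    · refine Finset.sum_congr rfl fun i _ => ?_
      rw [Finset.card_product]; simp
    · intro i _ j _ hij
      refine Finset.disjoint_left.2 fun p hp hq => ?_
      simp only [Finset.mem_product, Finset.mem_singleton] at hp hq
      exact hij (hp.1 ▸ hq.1 ▸ rfl)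
  -- column monotonicity
  have hcolstrictD : ∀ d i j, j < lam (i + d + 1) → T' i j < T' (i + d + 1) j := by
    intro d
    induction d with
    | zero => intro i j hj; exact hcol i j hj
    | succ d ih =>
      intro i j hj
      exact lt_trans (ih i j (lt_of_lt_of_le hj (hmono _ _ (by omega)))) (hcol (i+d+1) j hj)
  have hcolS : ∀ i i' j, i < i' → j < lam i' → T' i j < T' i' j := by
    intro i i' j h hj
    obtain ⟨d, rfl⟩ : ∃ d, i' = i + d + 1 := ⟨i' - i - 1, by omega⟩
    exact hcolstrictD d i j hj
  have hcolW : ∀ i i' j, i ≤ i' → j < lam i' → T' i j ≤ T' i' j := by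
    intro i i' j h hj
    rcases eq_or_lt_of_le h with rfl | h
    · exact le_rfl
    · exact le_of_lt (hcolS _ _ _ h hj)
  have hcol0 : ∀ p : ℕ × ℕ, p ∈ cells → p.2 < lam 0 := fun p hp =>
    lt_of_lt_of_le ((hmem p).1 hp) (hmono 0 p.1 (Nat.zero_le _))
  have hklt : ∀ p q : ℕ × ℕ, p ∈ cells → q ∈ cells →
      (key p < key q ↔ (T' p.1 p.2 < T' q.1 q.2 ∨ (T' p.1 p.2 = T' q.1 q.2 ∧ p.2 < q.2))) :=
    fun p q hp hq => keyLtAux (lam 0) _ _ _ _ (hcol0 p hp) (hcol0 q hq)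
  have hkinj : ∀ p q : ℕ × ℕ, p ∈ cells → q ∈ cells → key p = key q → p = q := by
    intro p q hp hq h
    obtain ⟨pa, pb⟩ := p
    obtain ⟨qa, qb⟩ := q
    obtain ⟨h1, h2⟩ := keyEqAux (lam 0) _ _ _ _ (hcol0 _ hp) (hcol0 _ hq) h
    have h1' : T' pa pb = T' qa qb := h1
    have h2' : pb = qb := h2
    subst h2'
    have : pa = qa := by
      rcases Nat.lt_trichotomy pa qa with h3|h3|h3
      · have := hcolS pa qa pb h3 ((hmem (qa, pb)).1 hq); omega
      · exact h3
      · have := hcolS qa pa pb h3 ((hmem (pa, pb)).1 hp); omega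
    subst this
    rfl
  -- rank
  have hTval : ∀ p : ℕ × ℕ, p ∈ cells →
      T p.1 p.2 = (cells.filter (fun q => key q < key p)).card + 1 := by
    intro p hp
    have hpc := (hmem p).1 hp
    rw [hTdef p.1 p.2, if_pos hpc]
    congr 1
    have hset : {q : ℕ × ℕ | q.2 < lam q.1 ∧ (T' q.1 q.2 < T' p.1 p.2 ∨
        (T' q.1 q.2 = T' p.1 p.2 ∧ q.2 < p.2))}
        = ↑(cells.filter (fun q => key q < key p)) := by
      ext q
      simp only [Set.mem_setOf_eq, Finset.coe_filter, hmem]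
      constructor
      · rintro ⟨h1, h2⟩
        exact ⟨h1, (hklt q p ((hmem q).2 h1) hp).2 h2⟩
      · rintro ⟨h1, h2⟩
        exact ⟨h1, (hklt q p ((hmem q).2 h1) hp).1 h2⟩
    rw [hset, Set.ncard_coe_finset]
  have hrmono : ∀ p q : ℕ × ℕ, p ∈ cells → q ∈ cells → key p < key q →
      (cells.filter (fun w => key w < key p)).card < (cells.filter (fun w => key w < key q)).card := by
    intro p q hp hq h
    apply Finset.card_lt_card
    refine (Finset.ssubset_iff_of_subset ?_).2
      ⟨p, Finset.mem_filter.2 ⟨hp, h⟩, fun hc => lt_irrefl _ (Finset.mem_filter.1 hc).2⟩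
    intro w hw
    rw [Finset.mem_filter] at hw ⊢
    exact ⟨hw.1, lt_trans hw.2 h⟩
  have hrlt : ∀ p : ℕ × ℕ, p ∈ cells →
      (cells.filter (fun w => key w < key p)).card < cells.card := by
    intro p hp
    apply Finset.card_lt_card
    exact (Finset.ssubset_iff_of_subset (Finset.filter_subset _ _)).2
      ⟨p, hp, fun hc => lt_irrefl _ (Finset.mem_filter.1 hc).2⟩
  have hrinj : ∀ p q : ℕ × ℕ, p ∈ cells → q ∈ cells →
      (cells.filter (fun w => key w < key p)).card = (cells.filter (fun w => key w < key q)).card →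
      p = q := by
    intro p q hp hq h
    rcases Nat.lt_trichotomy (key p) (key q) with hk|hk|hk
    · exact absurd h (Nat.ne_of_lt (hrmono p q hp hq hk))
    · exact hkinj p q hp hq hk
    · exact absurd h.symm (Nat.ne_of_lt (hrmono q p hq hp hk))
  constructor
  · refine ⟨?_, ?_, ?_, ?_⟩
    · intro i j hj
      have hp : ((i,j) : ℕ × ℕ) ∈ cells := (hmem _).2 hj
      have h1 := hrlt (i,j) hp
      rw [hTval (i,j) hp]
      omega
    · intro i j i' j' hj hj' heq
      have hp : ((i,j) : ℕ × ℕ) ∈ cells := (hmem _).2 hj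
      have hq : ((i',j') : ℕ × ℕ) ∈ cells := (hmem _).2 hj'
      rw [hTval _ hp, hTval _ hq] at heq
      exact hrinj _ _ hp hq (by omega)
    · intro i j hj
      have hp : ((i,j) : ℕ × ℕ) ∈ cells := (hmem (i,j)).2 (show j < lam i by omega)
      have hq : ((i,j+1) : ℕ × ℕ) ∈ cells := (hmem _).2 hj
      rw [hTval _ hp, hTval _ hq]
      have hk : key (i,j) < key (i,j+1) := by
        refine (hklt _ _ hp hq).2 ?_
        rcases lt_or_eq_of_le (hrow i j (j+1) (by omega) hj) with h|h
        · exact Or.inl h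
        · exact Or.inr ⟨h, by omega⟩
      have := hrmono _ _ hp hq hk
      omega
    · intro i j hj
      have hp : ((i,j) : ℕ × ℕ) ∈ cells := (hmem _).2 (lt_of_lt_of_le hj (hmono i (i+1) (by omega)))
      have hq : ((i+1,j) : ℕ × ℕ) ∈ cells := (hmem _).2 hj
      rw [hTval _ hp, hTval _ hq]
      have hk : key (i,j) < key (i+1,j) := (hklt _ _ hp hq).2 (Or.inl (hcol i j hj))
      have := hrmono _ _ hp hq hk
      omega
  -- descents
  · have hSmono : ∀ v w, v < w → w ≤ r →
        (cells.filter (fun p => T' p.1 p.2 ≤ v)).card < (cells.filter (fun p => T' p.1 p.2 ≤ w)).card := by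
      intro v w hvw hw
      obtain ⟨i, j, hj, hv⟩ := hall (v+1) (by omega) (by omega)
      have hp : ((i,j) : ℕ × ℕ) ∈ cells := (hmem _).2 hj
      apply Finset.card_lt_card
      refine (Finset.ssubset_iff_of_subset ?_).2
        ⟨(i,j), Finset.mem_filter.2 ⟨hp, by simp only []; omega⟩,
          fun hc => by have := (Finset.mem_filter.1 hc).2; simp only [] at this; omega⟩
      intro w' hw'
      rw [Finset.mem_filter] at hw' ⊢
      exact ⟨hw'.1, le_trans hw'.2 (le_of_lt hvw)⟩
    have hSinj : Set.InjOn (fun v => (cells.filter (fun p => T' p.1 p.2 ≤ v)).card)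
        ↑(Finset.Icc 1 (r-1)) := by
      intro v hv w hw h
      simp only [Finset.coe_Icc, Set.mem_Icc] at hv hw
      by_contra hne
      rcases Nat.lt_trichotomy v w with h1|h1|h1
      · have := hSmono v w h1 (by omega); simp only [] at h; omega
      · exact hne h1
      · have := hSmono w v h1 (by omega); simp only [] at h; omega
    have hDset : {k : ℕ | IsDescent lam T k} =
        ↑((Finset.Icc 1 (r-1)).image (fun v => (cells.filter (fun p => T' p.1 p.2 ≤ v)).card)) := by
      ext k
      simp only [Set.mem_setOf_eq, Finset.coe_image, Set.mem_image, Finset.mem_coe,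
        Finset.mem_Icc]
      constructor
      · rintro ⟨i, j, i', j', hj, hj', hk, hk1, hii⟩
        have hp : ((i,j) : ℕ × ℕ) ∈ cells := (hmem _).2 hj
        have hq : ((i',j') : ℕ × ℕ) ∈ cells := (hmem _).2 hj'
        rw [hTval _ hp] at hk
        rw [hTval _ hq] at hk1
        have hkpq : key (i,j) < key (i',j') := by
          rcases Nat.lt_trichotomy (key (i,j)) (key (i',j')) with h|h|h
          · exact h
          · exfalso
            have := hkinj _ _ hp hq h
            have : i = i' := congrArg Prod.fst this
            omega
          · have := hrmono _ _ hq hp h; omega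
        have hcons : cells.filter (fun w => key w < key (i',j')) =
            insert (i,j) (cells.filter (fun w => key w < key (i,j))) := by
          have hnm : ((i,j) : ℕ × ℕ) ∉ cells.filter (fun w => key w < key (i,j)) :=
            fun hc => lt_irrefl _ (Finset.mem_filter.1 hc).2
          refine (Finset.eq_of_subset_of_card_le ?_ ?_).symm
          · intro w hw
            rcases Finset.mem_insert.1 hw with rfl | hw
            · exact Finset.mem_filter.2 ⟨hp, hkpq⟩
            · rw [Finset.mem_filter] at hw ⊢
              exact ⟨hw.1, lt_trans hw.2 hkpq⟩
          · rw [Finset.card_insert_of_notMem hnm]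
            omega
        have hvr := hbd i j hj
        have hv'r := hbd i' j' hj'
        have hlt : T' i j < T' i' j' := by
          rcases (hklt _ _ hp hq).1 hkpq with h | ⟨heq, hcol2⟩
          · exact h
          · exfalso
            have heq2 : T' i j = T' i' j' := heq
            have hcol2' : j < j' := hcol2
            have hcell : j < lam i' := lt_trans hcol2' hj'
            have h1 : T' i j < T' i' j := hcolS i i' j hii hcell
            have h2 : T' i' j ≤ T' i' j' := hrow i' j j' (le_of_lt hcol2') hj'
            omega
        have hsucc : T' i' j' = T' i j + 1 := by
          by_contra hne
          obtain ⟨a, b, hb, hab⟩ := hall (T' i j + 1) (by omega) (by omega)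
          have hw : ((a,b) : ℕ × ℕ) ∈ cells := (hmem _).2 hb
          have h1 : key (a,b) < key (i',j') := (hklt _ _ hw hq).2 (Or.inl (show T' a b < T' i' j' by omega))
          have h2 : key (i,j) < key (a,b) := (hklt _ _ hp hw).2 (Or.inl (show T' i j < T' a b by omega))
          have h3 : ((a,b) : ℕ × ℕ) ∈ cells.filter (fun w => key w < key (i',j')) :=
            Finset.mem_filter.2 ⟨hw, h1⟩
          rw [hcons] at h3
          rcases Finset.mem_insert.1 h3 with h4|h4
          · rw [h4] at h2; exact lt_irrefl _ h2
          · have := (Finset.mem_filter.1 h4).2; omega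
        refine ⟨T' i j, ⟨hvr.1, by omega⟩, ?_⟩
        have hfe : cells.filter (fun w => T' w.1 w.2 ≤ T' i j) =
            cells.filter (fun w => key w < key (i',j')) := by
          ext w
          simp only [Finset.mem_filter]
          constructor
          · rintro ⟨hw, hle⟩
            exact ⟨hw, (hklt _ _ hw hq).2 (Or.inl (show T' w.1 w.2 < T' i' j' by omega))⟩
          · rintro ⟨hw, hlt2⟩
            refine ⟨hw, ?_⟩
            have h3 : w ∈ cells.filter (fun w => key w < key (i',j')) :=
              Finset.mem_filter.2 ⟨hw, hlt2⟩
            rw [hcons] at h3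
            rcases Finset.mem_insert.1 h3 with rfl | h4
            · exact le_rfl
            · have h5 := (Finset.mem_filter.1 h4).2
              rcases (hklt _ _ (Finset.mem_filter.1 h4).1 hp).1 h5 with h6 | ⟨h6, _⟩
              · have h6' : T' w.1 w.2 < T' i j := h6
                omega
              · have h6' : T' w.1 w.2 = T' i j := h6
                omega
        rw [hfe]
        omega
      · rintro ⟨v, ⟨hv1, hv2⟩, rfl⟩
        have hv1r : v + 1 ≤ r := by omega
        obtain ⟨qa, qb, hqb, hqv⟩ := hall v hv1 (by omega)
        obtain ⟨ra, rb, hrb, hrv⟩ := hall (v+1) (by omega) hv1r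
        have hA : (cells.filter (fun w => T' w.1 w.2 = v)).Nonempty :=
          ⟨(qa,qb), Finset.mem_filter.2 ⟨(hmem _).2 hqb, hqv⟩⟩
        have hB : (cells.filter (fun w => T' w.1 w.2 = v+1)).Nonempty :=
          ⟨(ra,rb), Finset.mem_filter.2 ⟨(hmem _).2 hrb, hrv⟩⟩
        obtain ⟨p₁, hp₁A, hp₁max⟩ := Finset.exists_max_image _ key hA
        obtain ⟨p₂, hp₂B, hp₂min⟩ := Finset.exists_min_image _ key hB
        have hp₁c : p₁ ∈ cells := (Finset.mem_filter.1 hp₁A).1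
        have hp₁v : T' p₁.1 p₁.2 = v := (Finset.mem_filter.1 hp₁A).2
        have hp₂c : p₂ ∈ cells := (Finset.mem_filter.1 hp₂B).1
        have hp₂v : T' p₂.1 p₂.2 = v + 1 := (Finset.mem_filter.1 hp₂B).2
        have h1 : insert p₁ (cells.filter fun w => key w < key p₁) =
            cells.filter (fun w => T' w.1 w.2 ≤ v) := by
          ext w
          simp only [Finset.mem_insert, Finset.mem_filter]
          constructor
          · rintro (rfl | ⟨hw, hlt⟩)
            · exact ⟨hp₁c, le_of_eq hp₁v⟩
            · refine ⟨hw, ?_⟩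
              rcases (hklt _ _ hw hp₁c).1 hlt with h|⟨h,_⟩ <;> omega
          · rintro ⟨hw, hle⟩
            rcases eq_or_lt_of_le hle with heq | hlt
            · have hwA : w ∈ cells.filter (fun w => T' w.1 w.2 = v) :=
                Finset.mem_filter.2 ⟨hw, heq⟩
              rcases eq_or_lt_of_le (hp₁max w hwA) with he | hl
              · exact Or.inl (hkinj _ _ hw hp₁c he)
              · exact Or.inr ⟨hw, hl⟩
            · exact Or.inr ⟨hw, (hklt _ _ hw hp₁c).2 (Or.inl (by omega))⟩
        have hnm : p₁ ∉ cells.filter (fun w => key w < key p₁) :=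
          fun hc => lt_irrefl _ (Finset.mem_filter.1 hc).2
        have hT1 : T p₁.1 p₁.2 = (cells.filter (fun p => T' p.1 p.2 ≤ v)).card := by
          rw [hTval _ hp₁c]
          have h2 := congrArg Finset.card h1
          rw [Finset.card_insert_of_notMem hnm] at h2
          exact h2
        have h2 : cells.filter (fun w => key w < key p₂) =
            cells.filter (fun w => T' w.1 w.2 ≤ v) := by
          ext w
          simp only [Finset.mem_filter]
          constructor
          · rintro ⟨hw, hlt⟩
            refine ⟨hw, ?_⟩
            rcases (hklt _ _ hw hp₂c).1 hlt with h|⟨h,_⟩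
            · omega
            · exfalso
              have hwB : w ∈ cells.filter (fun w => T' w.1 w.2 = v+1) :=
                Finset.mem_filter.2 ⟨hw, by omega⟩
              exact absurd hlt (Nat.not_lt.2 (hp₂min w hwB))
          · rintro ⟨hw, hle⟩
            exact ⟨hw, (hklt _ _ hw hp₂c).2 (Or.inl (by omega))⟩
        have hT2 : T p₂.1 p₂.2 = (cells.filter (fun p => T' p.1 p.2 ≤ v)).card + 1 := by
          rw [hTval _ hp₂c, h2]
        obtain ⟨i₁, j₁, i₂, j₂, hj₁, hj₂, hv₁, hv₂, hjj⟩ := hcond v hv1 hv2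
        have hc1 : ((i₁,j₁) : ℕ × ℕ) ∈ cells.filter (fun w => T' w.1 w.2 = v) :=
          Finset.mem_filter.2 ⟨(hmem _).2 hj₁, hv₁⟩
        have hc2 : ((i₂,j₂) : ℕ × ℕ) ∈ cells.filter (fun w => T' w.1 w.2 = v+1) :=
          Finset.mem_filter.2 ⟨(hmem _).2 hj₂, hv₂⟩
        have hcol1 : j₁ ≤ p₁.2 := by
          have h3 := hp₁max _ hc1
          rw [hkeydef] at h3
          simp only [keyF] at h3
          rw [hv₁, hp₁v] at h3
          exact Nat.le_of_add_le_add_left h3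
        have hcol2 : p₂.2 ≤ j₂ := by
          have h3 := hp₂min _ hc2
          rw [hkeydef] at h3
          simp only [keyF] at h3
          rw [hv₂, hp₂v] at h3
          exact Nat.le_of_add_le_add_left h3
        have hcols : p₂.2 ≤ p₁.2 := le_trans hcol2 (le_trans hjj hcol1)
        have hrow12 : p₁.1 < p₂.1 := by
          by_contra hle
          push_neg at hle
          have hcell : p₂.2 < lam p₁.1 := lt_of_le_of_lt hcols ((hmem _).1 hp₁c)
          have h3 := hcolW p₂.1 p₁.1 p₂.2 hle hcell
          have h4 := hrow p₁.1 p₂.2 p₁.2 hcols ((hmem _).1 hp₁c)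
          omega
        exact ⟨p₁.1, p₁.2, p₂.1, p₂.2, (hmem _).1 hp₁c, (hmem _).1 hp₂c, hT1, hT2, hrow12⟩
    rw [hDset, Set.ncard_coe_finset, Finset.card_image_of_injOn hSinj, Nat.card_Icc]
    omega
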